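/- Let n ≥ 2, let i_1 < … < i_r (with r ≥ 1) be indices in {1, …, n}, let s = i_1, and let D = ℂⁿ \ (⋃_{k=1}^{r} {z : z_{i_k} = 0}). Then the identity map of D and the automorphism (z_1, …, z_n) ↦ (z_1, …, z_{s-1}, 1/z_s, z_{s+1}, …, z_n) lie in different connected components of Aut(D) with the compact-open topology. -/

import Mathlib

/-- The complement in `ℂⁿ` of the union of the coordinate hyperplanes
`{z : z_{i k} = 0}`, `k = 1, …, r`. -/
def HyperplaneComplement (n r : ℕ) (i : Fin r → Fin n) : Set (Fin n → ℂ) :=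
  {z : Fin n → ℂ | ∀ k : Fin r, z (i k) ≠ 0}

/-- `Aut(D)` for `D ⊆ ℂⁿ`: the set of continuous self-maps of `D` that are
holomorphic (i.e. restrictions to `D` of maps holomorphic on `D`) and admit a
holomorphic inverse, topologized by the compact-open topology. -/
def AutOf {n : ℕ} (D : Set (Fin n → ℂ)) : Set C(D, D) :=
  {F : C(D, D) |
    (∃ F' : (Fin n → ℂ) → (Fin n → ℂ), DifferentiableOn ℂ F' D ∧
        ∀ z : D, (F z : Fin n → ℂ) = F' (z : Fin n → ℂ)) ∧
    ∃ G : C(D, D),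
      (∃ G' : (Fin n → ℂ) → (Fin n → ℂ), DifferentiableOn ℂ G' D ∧
          ∀ z : D, (G z : Fin n → ℂ) = G' (z : Fin n → ℂ)) ∧
      (∀ z : D, G (F z) = z) ∧ (∀ z : D, F (G z) = z)}

open Complex

open Classical in
noncomputable def wnum (h : C(unitInterval, ℂ)) : ℂ :=
  if H : ∃ g : C(unitInterval, ℂ), ∀ t, h t = Complex.exp (g t) then
    H.choose 1 - H.choose 0
  else 0

lemma wnum_eq (h g : C(unitInterval, ℂ))
    (hg : ∀ t, h t = Complex.exp (g t)) : wnum h = g 1 - g 0 := by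
  have H : ∃ g : C(unitInterval, ℂ), ∀ t, h t = Complex.exp (g t) := ⟨g, hg⟩
  rw [wnum, dif_pos H]
  set g' := H.choose with hg'def
  have hspec : ∀ t, h t = Complex.exp (g' t) := H.choose_spec
  have h2pi : (2 * (Real.pi : ℂ) * I) ≠ 0 := by
    simp [Real.pi_ne_zero, Complex.I_ne_zero]
  have key : ∀ t : unitInterval, ∃ m : ℤ, g' t - g t = m * (2 * Real.pi * I) := by
    intro t
    have hx : Complex.exp (g' t) = Complex.exp (g t) := by rw [← hspec t, ← hg t]
    obtain ⟨m, hm⟩ := Complex.exp_eq_exp_iff_exists_int.mp hx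
    exact ⟨m, by rw [hm]; ring⟩
  set q : unitInterval → ℝ := fun t => ((g' t - g t) / (2 * Real.pi * I)).re with hqdef
  have hqint : ∀ t, ∃ m : ℤ, q t = m ∧ g' t - g t = m * (2 * Real.pi * I) := by
    intro t
    obtain ⟨m, hm⟩ := key t
    refine ⟨m, ?_, hm⟩
    rw [hqdef]
    simp only [hm, mul_div_assoc, div_self h2pi, mul_one, Complex.intCast_re]
  have hqcont : Continuous q :=
    Complex.continuous_re.comp ((g'.continuous.sub g.continuous).div_const _)
  have hq01 : q 0 = q 1 := by
    by_contra hne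
    obtain ⟨m0, hm0, _⟩ := hqint 0
    obtain ⟨m1, hm1, _⟩ := hqint 1
    have hS : IsPreconnected (q '' Set.univ) :=
      isPreconnected_univ.image q hqcont.continuousOn
    have hsub : Set.uIcc (q 0) (q 1) ⊆ q '' Set.univ :=
      (isPreconnected_iff_ordConnected.mp hS).uIcc_subset ⟨0, trivial, rfl⟩ ⟨1, trivial, rfl⟩
    have hmm : m0 ≠ m1 := by
      intro hEq; apply hne; rw [hm0, hm1, hEq]
    -- a non-integer point in the interval
    have : ∃ c : ℝ, c ∈ Set.uIcc (q 0) (q 1) ∧ ∀ k : ℤ, (k : ℝ) ≠ c := by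
      rcases lt_or_gt_of_ne hmm with hlt | hlt
      · refine ⟨(m0 : ℝ) + 1/2, ?_, ?_⟩
        · rw [hm0, hm1, Set.uIcc_of_le (by exact_mod_cast hlt.le)]
          constructor
          · linarith
          · have : (m0 : ℝ) + 1 ≤ m1 := by exact_mod_cast hlt
            linarith
        · intro k hk
          have : (2 * k : ℤ) = 2 * m0 + 1 := by
            have : (2 * (k : ℝ)) = 2 * m0 + 1 := by rw [hk]; ring
            exact_mod_cast this
          omega
      · refine ⟨(m1 : ℝ) + 1/2, ?_, ?_⟩
        · rw [hm0, hm1, Set.uIcc_of_ge (by exact_mod_cast hlt.le)]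
          constructor
          · linarith
          · have : (m1 : ℝ) + 1 ≤ m0 := by exact_mod_cast hlt
            linarith
        · intro k hk
          have : (2 * k : ℤ) = 2 * m1 + 1 := by
            have : (2 * (k : ℝ)) = 2 * m1 + 1 := by rw [hk]; ring
            exact_mod_cast this
          omega
    obtain ⟨c, hc, hcint⟩ := this
    obtain ⟨t, -, ht⟩ := hsub hc
    obtain ⟨m, hm, -⟩ := hqint t
    exact hcint m (by rw [← hm, ht])
  obtain ⟨m0, hm0, he0⟩ := hqint 0
  obtain ⟨m1, hm1, he1⟩ := hqint 1
  have : m0 = m1 := by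
    have : (m0 : ℝ) = m1 := by rw [← hm0, ← hm1, hq01]
    exact_mod_cast this
  have : g' 1 - g 1 = g' 0 - g 0 := by rw [he0, he1, this]
  linear_combination this

lemma wnum_transfer (h₀ h : C(unitInterval, ℂ)) (hper0 : h₀ 0 = h₀ 1) (hper : h 0 = h 1)
    (hcl : ∀ t, ‖h t - h₀ t‖ < ‖h₀ t‖)
    (g₀ : C(unitInterval, ℂ)) (hg₀ : ∀ t, h₀ t = Complex.exp (g₀ t)) :
    (∃ g : C(unitInterval, ℂ), ∀ t, h t = Complex.exp (g t)) ∧ wnum h = wnum h₀ := by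
  have h₀ne : ∀ t, h₀ t ≠ 0 := fun t => by rw [hg₀ t]; exact Complex.exp_ne_zero _
  have hne : ∀ t, h t ≠ 0 := by
    intro t h0
    have := hcl t
    rw [h0, zero_sub, norm_neg] at this
    exact lt_irrefl _ this
  have hslit : ∀ t, h t / h₀ t ∈ Complex.slitPlane := by
    intro t
    have hnorm : ‖h t / h₀ t - 1‖ < 1 := by
      rw [div_sub_one (h₀ne t), norm_div]
      exact (div_lt_one (norm_pos_iff.mpr (h₀ne t))).mpr (hcl t)
    have := Complex.mem_slitPlane_of_norm_lt_one hnorm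
    rwa [add_sub_cancel] at this
  have hqcont : Continuous fun t : unitInterval => Complex.log (h t / h₀ t) := by
    rw [continuous_iff_continuousAt]
    intro t
    have hdiv : Continuous fun u : unitInterval => h u / h₀ u :=
      h.continuous.div h₀.continuous fun u => h₀ne u
    exact ContinuousAt.comp (x := t) (g := Complex.log)
      (f := fun u : unitInterval => h u / h₀ u) (continuousAt_clog (hslit t)) hdiv.continuousAt
  set q : C(unitInterval, ℂ) := ⟨fun t => Complex.log (h t / h₀ t), hqcont⟩ with hq
  have hglift : ∀ t, h t = Complex.exp ((g₀ + q) t) := by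
    intro t
    have : Complex.exp (q t) = h t / h₀ t :=
      Complex.exp_log (div_ne_zero (hne t) (h₀ne t))
    rw [ContinuousMap.add_apply, Complex.exp_add, ← hg₀ t, this,
      mul_div_cancel₀ _ (h₀ne t)]
  refine ⟨⟨g₀ + q, hglift⟩, ?_⟩
  rw [wnum_eq h (g₀ + q) hglift, wnum_eq h₀ g₀ hg₀]
  have hqper : q 0 = q 1 := by
    simp only [hq, ContinuousMap.coe_mk]
    rw [hper, hper0]
  simp only [ContinuousMap.add_apply]
  rw [← hqper]
  ring

/-- For `n ≥ 2`, `D = ℂⁿ` minus the coordinate hyperplanes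
`{z_{i k} = 0}` (with `i₁ < … < i_r`, `r ≥ 1`) and `s = i₁`, the identity and
the coordinate inversion `z ↦ (z₁, …, 1/z_s, …, zₙ)` are both in `Aut(D)` but
lie in different connected components of `Aut(D)` (compact-open topology). -/
theorem identity_and_inversion_in_different_components
    (n r : ℕ) (hn : 2 ≤ n) (hr : 0 < r)
    (i : Fin r → Fin n) (hi : StrictMono i)
    (s : Fin n) (hs : s = i ⟨0, hr⟩)
    (Fid Finv : C(HyperplaneComplement n r i, HyperplaneComplement n r i))
    (hFid : ∀ z : HyperplaneComplement n r i, Fid z = z)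
    (hFinv : ∀ z : HyperplaneComplement n r i,
      (Finv z : Fin n → ℂ) = Function.update (z : Fin n → ℂ) s ((z : Fin n → ℂ) s)⁻¹) :
    Fid ∈ AutOf (HyperplaneComplement n r i) ∧
    Finv ∈ AutOf (HyperplaneComplement n r i) ∧
    Finv ∉ connectedComponentIn (AutOf (HyperplaneComplement n r i)) Fid := by
  have hzs : ∀ z : HyperplaneComplement n r i, (z : Fin n → ℂ) s ≠ 0 := by
    intro z
    have := z.2 ⟨0, hr⟩
    rwa [← hs] at this
  have hFidAut : Fid ∈ AutOf (HyperplaneComplement n r i) := by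
    refine ⟨⟨fun z => z, differentiable_id.differentiableOn, fun z => by rw [hFid z]⟩,
      Fid, ⟨fun z => z, differentiable_id.differentiableOn, fun z => by rw [hFid z]⟩,
      fun z => by rw [hFid, hFid], fun z => by rw [hFid, hFid]⟩
  have hFinvHolo : ∃ F' : (Fin n → ℂ) → (Fin n → ℂ), DifferentiableOn ℂ F' (HyperplaneComplement n r i) ∧
      ∀ z : HyperplaneComplement n r i, (Finv z : Fin n → ℂ) = F' (z : Fin n → ℂ) := by
    refine ⟨fun z => Function.update z s (z s)⁻¹, ?_, fun z => by rw [hFinv z]⟩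
    intro z hz
    apply DifferentiableAt.differentiableWithinAt
    rw [differentiableAt_pi]
    intro j
    by_cases hj : j = s
    · have hfun : (fun w : Fin n → ℂ => Function.update w s (w s)⁻¹ j)
          = fun w : Fin n → ℂ => (w s)⁻¹ := by
        funext w; rw [Function.update_apply, if_pos hj]
      rw [hfun]
      exact DifferentiableAt.inv
        ((ContinuousLinearMap.proj (R := ℂ) (φ := fun _ : Fin n => ℂ) s).differentiableAt)
        (hzs ⟨z, hz⟩)
    · have hfun : (fun w : Fin n → ℂ => Function.update w s (w s)⁻¹ j)
          = fun w : Fin n → ℂ => w j := by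
        funext w; rw [Function.update_apply, if_neg hj]
      rw [hfun]
      exact (ContinuousLinearMap.proj (R := ℂ) (φ := fun _ : Fin n => ℂ) j).differentiableAt
  have hinvol : ∀ z : HyperplaneComplement n r i, Finv (Finv z) = z := by
    intro z
    apply Subtype.ext
    rw [hFinv (Finv z), hFinv z]
    simp [Function.update_idem, Function.update_self, inv_inv, Function.update_eq_self]
  have hFinvAut : Finv ∈ AutOf (HyperplaneComplement n r i) := ⟨hFinvHolo, Finv, hFinvHolo, hinvol, hinvol⟩
  refine ⟨hFidAut, hFinvAut, ?_⟩
  intro hmem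
  -- the loop in `D` around the hyperplane `z_s = 0`
  set e : unitInterval → ℂ := fun t => Complex.exp (2 * Real.pi * Complex.I * (t : ℝ)) with he
  have hecont : Continuous e := Complex.continuous_exp.comp
    (continuous_const.mul (Complex.continuous_ofReal.comp continuous_subtype_val))
  have he0 : e 0 = 1 := by
    show Complex.exp (2 * Real.pi * Complex.I * ((0 : unitInterval) : ℝ)) = 1
    norm_num
  have he1 : e 1 = 1 := by
    show Complex.exp (2 * Real.pi * Complex.I * ((1 : unitInterval) : ℝ)) = 1
    rw [show ((1 : unitInterval) : ℝ) = 1 from rfl]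
    push_cast
    rw [mul_one]
    rw [show (2 : ℂ) * Real.pi * Complex.I = 2 * Real.pi * Complex.I from rfl]
    exact_mod_cast Complex.exp_two_pi_mul_I
  have hγmem : ∀ t : unitInterval, Function.update (fun _ : Fin n => (1 : ℂ)) s (e t) ∈ (HyperplaneComplement n r i) := by
    intro t k
    rw [Function.update_apply]
    split
    · exact Complex.exp_ne_zero _
    · exact one_ne_zero
  set γ : C(unitInterval, HyperplaneComplement n r i) :=
    ⟨fun t => ⟨Function.update (fun _ : Fin n => (1 : ℂ)) s (e t), hγmem t⟩, by
      refine Continuous.subtype_mk (continuous_pi fun j => ?_) _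
      by_cases hj : j = s
      · simp only [Function.update_apply, if_pos hj]
        exact hecont
      · simp only [Function.update_apply, if_neg hj]
        exact continuous_const⟩ with hγ
  have hγ01 : γ 0 = γ 1 := by
    apply Subtype.ext
    show Function.update (fun _ : Fin n => (1 : ℂ)) s (e 0)
      = Function.update (fun _ : Fin n => (1 : ℂ)) s (e 1)
    rw [he0, he1]
  set proj : C(HyperplaneComplement n r i, ℂ) :=
    ⟨fun z => (z : Fin n → ℂ) s, (continuous_apply s).comp continuous_subtype_val⟩ with hproj
  set Θ : C(HyperplaneComplement n r i, HyperplaneComplement n r i) → C(unitInterval, ℂ) := fun F => (proj.comp F).comp γ with hΘ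
  have hΘcont : Continuous Θ :=
    (ContinuousMap.continuous_precomp γ).comp (ContinuousMap.continuous_postcomp proj)
  have hΘper : ∀ F : C(HyperplaneComplement n r i, HyperplaneComplement n r i), Θ F 0 = Θ F 1 := by
    intro F
    show proj (F (γ 0)) = proj (F (γ 1))
    rw [hγ01]
  have hΘne : ∀ (F : C(HyperplaneComplement n r i, HyperplaneComplement n r i)) (t : unitInterval), Θ F t ≠ 0 := by
    intro F t
    show (F (γ t) : Fin n → ℂ) s ≠ 0
    exact hzs (F (γ t))
  -- the winding-number invariant is locally constant on C(D, D)
  have hLC : IsLocallyConstant (fun F : C(HyperplaneComplement n r i, HyperplaneComplement n r i) => wnum (Θ F)) := by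
    rw [IsLocallyConstant.iff_exists_open]
    intro F₀
    obtain ⟨t₀, -, hmin'⟩ := isCompact_univ.exists_isMinOn (Set.univ_nonempty)
      ((Θ F₀).continuous.norm.continuousOn)
    have hmin : ∀ t : unitInterval, ‖Θ F₀ t₀‖ ≤ ‖Θ F₀ t‖ := fun t => hmin' (Set.mem_univ t)
    set ε : ℝ := ‖Θ F₀ t₀‖ with hε
    have hεpos : 0 < ε := norm_pos_iff.mpr (hΘne F₀ t₀)
    refine ⟨Θ ⁻¹' Metric.ball (Θ F₀) (ε / 2), Metric.isOpen_ball.preimage hΘcont, ?_, ?_⟩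
    · show Θ F₀ ∈ Metric.ball (Θ F₀) (ε / 2)
      exact Metric.mem_ball_self (by positivity)
    intro F hF
    have hFd : dist (Θ F) (Θ F₀) < ε / 2 := hF
    have hd : ∀ t, ‖Θ F t - Θ F₀ t‖ < ε / 2 := by
      intro t
      calc ‖Θ F t - Θ F₀ t‖ = dist (Θ F t) (Θ F₀ t) := (dist_eq_norm _ _).symm
        _ ≤ dist (Θ F) (Θ F₀) := ContinuousMap.dist_apply_le_dist t
        _ < ε / 2 := hFd
    have h1 : ∀ t, ‖Θ F t - Θ F₀ t‖ < ‖Θ F₀ t‖ := by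
      intro t
      have := hmin t
      have := hd t
      linarith
    by_cases H₀ : ∃ g : C(unitInterval, ℂ), ∀ t, Θ F₀ t = Complex.exp (g t)
    · obtain ⟨g₀, hg₀⟩ := H₀
      exact (wnum_transfer (Θ F₀) (Θ F) (hΘper F₀) (hΘper F) h1 g₀ hg₀).2
    · have hnF : ¬ ∃ g : C(unitInterval, ℂ), ∀ t, Θ F t = Complex.exp (g t) := by
        rintro ⟨g, hg⟩
        apply H₀
        have h2 : ∀ t, ‖Θ F₀ t - Θ F t‖ < ‖Θ F t‖ := by
          intro t
          have ha := hmin t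
          have hb := hd t
          have hc : ‖Θ F₀ t‖ - ‖Θ F t‖ ≤ ‖Θ F₀ t - Θ F t‖ :=
            norm_sub_norm_le _ _
          have hrev : ‖Θ F₀ t - Θ F t‖ = ‖Θ F t - Θ F₀ t‖ := norm_sub_rev _ _
          linarith
        exact (wnum_transfer (Θ F) (Θ F₀) (hΘper F) (hΘper F₀) h2 g hg).1
      rw [wnum, dif_neg hnF, wnum, dif_neg H₀]
  -- values of the invariant at the identity and the inversion
  have hΘid : ∀ t, Θ Fid t = e t := by
    intro t
    show (Fid (γ t) : Fin n → ℂ) s = e t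
    rw [hFid (γ t)]
    show Function.update (fun _ : Fin n => (1 : ℂ)) s (e t) s = e t
    rw [Function.update_self]
  have hγs : ∀ t, (γ t : Fin n → ℂ) s = e t := by
    intro t
    show Function.update (fun _ : Fin n => (1 : ℂ)) s (e t) s = e t
    rw [Function.update_self]
  have hΘinv : ∀ t, Θ Finv t = (e t)⁻¹ := by
    intro t
    show (Finv (γ t) : Fin n → ℂ) s = (e t)⁻¹
    rw [hFinv (γ t), Function.update_self, hγs]
  set gid : C(unitInterval, ℂ) :=
    ⟨fun t => 2 * Real.pi * Complex.I * (t : ℝ),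
      continuous_const.mul (Complex.continuous_ofReal.comp continuous_subtype_val)⟩ with hgid
  set ginv : C(unitInterval, ℂ) :=
    ⟨fun t => -(2 * Real.pi * Complex.I * (t : ℝ)),
      (continuous_const.mul (Complex.continuous_ofReal.comp continuous_subtype_val)).neg⟩
    with hginv
  have hval_id : wnum (Θ Fid) = 2 * Real.pi * Complex.I := by
    rw [wnum_eq (Θ Fid) gid (fun t => by rw [hΘid t]; rfl)]
    show 2 * (Real.pi : ℂ) * Complex.I * ((1 : unitInterval) : ℝ)
      - 2 * (Real.pi : ℂ) * Complex.I * ((0 : unitInterval) : ℝ) = _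
    rw [show ((1 : unitInterval) : ℝ) = 1 from rfl, show ((0 : unitInterval) : ℝ) = 0 from rfl]
    push_cast
    ring
  have hval_inv : wnum (Θ Finv) = -(2 * Real.pi * Complex.I) := by
    have hlift : ∀ t, Θ Finv t = Complex.exp (ginv t) := by
      intro t
      rw [hΘinv t]
      show (Complex.exp _)⁻¹ = _
      rw [← Complex.exp_neg]
      rfl
    rw [wnum_eq (Θ Finv) ginv hlift]
    show -(2 * (Real.pi : ℂ) * Complex.I * ((1 : unitInterval) : ℝ))
      - -(2 * (Real.pi : ℂ) * Complex.I * ((0 : unitInterval) : ℝ)) = _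
    rw [show ((1 : unitInterval) : ℝ) = 1 from rfl, show ((0 : unitInterval) : ℝ) = 0 from rfl]
    push_cast
    ring
  have heq := hLC.apply_eq_of_isPreconnected isPreconnected_connectedComponentIn hmem
    (mem_connectedComponentIn hFidAut)
  simp only [hval_inv, hval_id] at heq
  have hne : (2 * Real.pi * Complex.I : ℂ) ≠ 0 := by
    simp [Real.pi_ne_zero, Complex.I_ne_zero]
  apply hne
  linear_combination (-1/2 : ℂ) * heq
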